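/- Let f ∈ ℂ[x,y,z] be homogeneous of degree d ≥ 1 not divisible by z, and g(x,y) = f(x,y,1). Then the morphism φ : AR(f) → AR(g) defined by φ(a,b,c) = (θ(a) − x·θ(c), θ(b) − y·θ(c), d·θ(c)) is surjective. -/

import Mathlib

open MvPolynomial

noncomputable section

/-- Dehomogenization `θ : ℂ[x,y,z] → ℂ[x,y]`, `u ↦ u(x,y,1)`. -/
def theta (u : MvPolynomial (Fin 3) ℂ) : MvPolynomial (Fin 2) ℂ :=
  aeval ![X 0, X 1, 1] u

/-- Restriction of a `Fin 3` exponent to `Fin 2`. -/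
def e2 (s : Fin 3 →₀ ℕ) : Fin 2 →₀ ℕ :=
  Finsupp.equivFunOnFinite.symm ![s 0, s 1]

@[simp] lemma e2_apply_0 (s : Fin 3 →₀ ℕ) : e2 s 0 = s 0 := rfl
@[simp] lemma e2_apply_1 (s : Fin 3 →₀ ℕ) : e2 s 1 = s 1 := rfl

lemma degree3 (s : Fin 3 →₀ ℕ) : s.degree = s 0 + s 1 + s 2 := by
  rw [Finsupp.degree_apply, Finset.sum_subset (Finset.subset_univ _)
    (by intro i _ hi; simpa using Finsupp.notMem_support_iff.mp hi)]
  exact Fin.sum_univ_three _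

lemma degree2 (s : Fin 2 →₀ ℕ) : s.degree = s 0 + s 1 := by
  rw [Finsupp.degree_apply, Finset.sum_subset (Finset.subset_univ _)
    (by intro i _ hi; simpa using Finsupp.notMem_support_iff.mp hi)]
  exact Fin.sum_univ_two _

lemma theta_monomial (s : Fin 3 →₀ ℕ) (c : ℂ) :
    theta (monomial s c) = monomial (e2 s) c := by
  rw [theta, aeval_monomial, monomial_eq, Finsupp.prod_pow, Finsupp.prod_pow,
    Fin.prod_univ_three, Fin.prod_univ_two]
  simp [algebraMap_eq]


lemma theta_add (u v : MvPolynomial (Fin 3) ℂ) : theta (u + v) = theta u + theta v :=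
  map_add (aeval ![X 0, X 1, 1]) u v

lemma theta_mul (u v : MvPolynomial (Fin 3) ℂ) : theta (u * v) = theta u * theta v :=
  map_mul (aeval ![X 0, X 1, 1]) u v

lemma theta_sum {ι : Type*} (t : Finset ι) (h : ι → MvPolynomial (Fin 3) ℂ) :
    theta (∑ i ∈ t, h i) = ∑ i ∈ t, theta (h i) :=
  map_sum (aeval ![X 0, X 1, 1]) h t

lemma theta_finsupp_sum {ι M : Type*} [Zero M] (t : ι →₀ M)
    (h : ι → M → MvPolynomial (Fin 3) ℂ) :
    theta (t.sum h) = t.sum fun i m => theta (h i m) :=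
  map_finsuppSum (aeval ![X 0, X 1, 1]) t h

/-- Homogenization to degree `N`. -/
def lift (N : ℕ) (p : MvPolynomial (Fin 2) ℂ) : MvPolynomial (Fin 3) ℂ :=
  (AddMonoidAlgebra.coeff p).sum fun m c =>
    monomial (Finsupp.equivFunOnFinite.symm ![m 0, m 1, N - (m 0 + m 1)]) c

lemma lift_monomial (N : ℕ) (m : Fin 2 →₀ ℕ) (c : ℂ) :
    lift N (monomial m c) =
      monomial (Finsupp.equivFunOnFinite.symm ![m 0, m 1, N - (m 0 + m 1)]) c := by
  rw [lift, sum_monomial_eq]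
  simp


lemma lift_zero (N : ℕ) : lift N 0 = 0 := Finsupp.sum_zero_index

lemma lift_add (N : ℕ) (p q : MvPolynomial (Fin 2) ℂ) :
    lift N (p + q) = lift N p + lift N q := by
  rw [lift, lift, lift]
  exact Finsupp.sum_add_index' (fun m => by simp) (fun m c1 c2 => by rw [map_add])

def liftHom (N : ℕ) : MvPolynomial (Fin 2) ℂ →+ MvPolynomial (Fin 3) ℂ :=
  ⟨⟨lift N, lift_zero N⟩, lift_add N⟩

lemma lift_sum (N : ℕ) {ι : Type*} (t : Finset ι) (h : ι → MvPolynomial (Fin 2) ℂ) :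
    lift N (∑ i ∈ t, h i) = ∑ i ∈ t, lift N (h i) :=
  map_sum (liftHom N) h t

lemma theta_lift (N : ℕ) (p : MvPolynomial (Fin 2) ℂ) : theta (lift N p) = p := by
  rw [lift, theta_finsupp_sum]
  conv_rhs => rw [p.as_sum]
  rw [Finsupp.sum]
  refine Finset.sum_congr rfl fun m _ => ?_
  rw [theta_monomial]
  have hm : e2 (Finsupp.equivFunOnFinite.symm ![m 0, m 1, N - (m 0 + m 1)]) = m := by
    ext i; fin_cases i <;> rfl
  rw [hm]
  rfl

lemma lift_isHomogeneous {N : ℕ} {p : MvPolynomial (Fin 2) ℂ}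
    (h : p.totalDegree ≤ N) : (lift N p).IsHomogeneous N := by
  rw [lift, Finsupp.sum]
  apply IsHomogeneous.sum
  intro m hm
  apply isHomogeneous_monomial
  have hle : m 0 + m 1 ≤ N := by
    have := le_totalDegree hm
    rw [show (m.sum fun _ e => e) = m.degree from rfl, degree2] at this
    omega
  rw [degree3]
  simp only [Finsupp.coe_equivFunOnFinite_symm]
  show m 0 + m 1 + (N - (m 0 + m 1)) = N
  omega

lemma lift_theta {u : MvPolynomial (Fin 3) ℂ} {n : ℕ}
    (hu : u.IsHomogeneous n) : lift n (theta u) = u := by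
  conv_lhs => rw [u.as_sum]
  conv_rhs => rw [u.as_sum]
  rw [theta_sum, lift_sum]
  refine Finset.sum_congr rfl fun s hs => ?_
  rw [theta_monomial, lift_monomial]
  have hdeg : s.degree = n := by
    have := hu (mem_support_iff.mp hs)
    rwa [Pi.one_def, ← Finsupp.degree_eq_weight_one] at this
  rw [degree3] at hdeg
  have hm : Finsupp.equivFunOnFinite.symm ![e2 s 0, e2 s 1, n - (e2 s 0 + e2 s 1)] = s := by
    ext i
    fin_cases i
    · rfl
    · rfl
    · show n - (s 0 + s 1) = s 2
      omega
  rw [hm]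

lemma X_mul_pderiv_monomial (i : Fin 3) (s : Fin 3 →₀ ℕ) (c : ℂ) :
    X i * pderiv i (monomial s c) = monomial s (c * s i) := by
  rw [pderiv_monomial, X, monomial_mul, one_mul]
  rcases Nat.eq_zero_or_pos (s i) with h | h
  · simp [h]
  · congr 1
    rw [add_tsub_cancel_of_le]
    exact Finsupp.single_le_iff.mpr h

lemma euler {f : MvPolynomial (Fin 3) ℂ} {d : ℕ} (hf : f.IsHomogeneous d) :
    X 0 * pderiv 0 f + X 1 * pderiv 1 f + X 2 * pderiv 2 f = C (d : ℂ) * f := by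
  conv_lhs => rw [f.as_sum]
  conv_rhs => rw [f.as_sum]
  rw [map_sum, map_sum, map_sum, Finset.mul_sum, Finset.mul_sum, Finset.mul_sum,
    Finset.mul_sum, ← Finset.sum_add_distrib, ← Finset.sum_add_distrib]
  refine Finset.sum_congr rfl fun s hs => ?_
  rw [X_mul_pderiv_monomial, X_mul_pderiv_monomial, X_mul_pderiv_monomial,
    ← map_add, ← map_add, C_mul_monomial]
  congr 1
  have hdeg : s.degree = d := by
    have := hf (mem_support_iff.mp hs)
    rwa [Pi.one_def, ← Finsupp.degree_eq_weight_one] at this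
  rw [degree3] at hdeg
  rw [← mul_add, ← mul_add, ← hdeg]
  push_cast
  ring

lemma pderiv_isHomogeneous {f : MvPolynomial (Fin 3) ℂ} {d : ℕ} (i : Fin 3)
    (hf : f.IsHomogeneous d) : (pderiv i f).IsHomogeneous (d - 1) := by
  conv_lhs => rw [f.as_sum]
  rw [map_sum]
  apply IsHomogeneous.sum
  intro s hs
  rw [pderiv_monomial]
  rcases Nat.eq_zero_or_pos (s i) with h | h
  · rw [h]
    simp only [Nat.cast_zero, mul_zero, map_zero]
    exact isHomogeneous_zero _ _ _
  · apply isHomogeneous_monomial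
    have hdeg : s.degree = d := by
      have := hf (mem_support_iff.mp hs)
      rwa [Pi.one_def, ← Finsupp.degree_eq_weight_one] at this
    rw [degree3] at hdeg
    rw [degree3]
    simp only [Finsupp.tsub_apply]
    have h01 : (Finsupp.single i 1 : Fin 3 →₀ ℕ) 0 + Finsupp.single i 1 1
        + Finsupp.single i 1 2 = 1 := by
      fin_cases i <;> simp [Finsupp.single_apply]
    have ht : ∀ j : Fin 3, (Finsupp.single i 1 : Fin 3 →₀ ℕ) j ≤ s j := by
      intro j
      rcases eq_or_ne i j with rfl | hij
      · simp only [Finsupp.single_eq_same]; omega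
      · simp [Finsupp.single_apply, hij]
    have := ht 0; have := ht 1; have := ht 2
    omega

lemma pderiv_theta (u : MvPolynomial (Fin 3) ℂ) (j : Fin 2) (k : Fin 3)
    (hjk : (j : ℕ) = (k : ℕ)) (hj2 : (k : ℕ) < 2) :
    pderiv j (theta u) = theta (pderiv k u) := by
  induction u using MvPolynomial.induction_on' with
  | monomial s c =>
    rw [theta_monomial, pderiv_monomial, pderiv_monomial, theta_monomial]
    have hval : e2 s j = s k := by
      fin_cases j <;> fin_cases k <;> simp_all <;> rfl
    rw [hval]
    have hexp : e2 s - Finsupp.single j 1 = e2 (s - Finsupp.single k 1) := by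
      ext i
      rw [Finsupp.tsub_apply]
      fin_cases j <;> fin_cases k <;> simp_all <;> fin_cases i <;>
        simp [e2, Finsupp.tsub_apply, Finsupp.single_apply]
    rw [hexp]
  | add p q hp hq =>
    rw [map_add, theta_add, map_add, theta_add, hp, hq]

lemma theta_pderiv_z {f : MvPolynomial (Fin 3) ℂ} {d : ℕ} (hf : f.IsHomogeneous d) :
    theta (pderiv 2 f) = C (d : ℂ) * theta f
      - X 0 * pderiv 0 (theta f) - X 1 * pderiv 1 (theta f) := by
  have h := congrArg theta (euler hf)
  rw [theta_add, theta_add, theta_mul, theta_mul, theta_mul, theta_mul] at h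
  have h0 : theta (X (0 : Fin 3)) = X 0 := by simp [theta]
  have h1 : theta (X (1 : Fin 3)) = X 1 := by simp [theta]
  have h2 : theta (X (2 : Fin 3)) = 1 := by simp [theta]
  have hC : theta (C (d : ℂ)) = C (d : ℂ) := by simp [theta]
  rw [h0, h1, h2, hC, one_mul] at h
  have hp0 : theta (pderiv (0 : Fin 3) f) = pderiv (0 : Fin 2) (theta f) :=
    (pderiv_theta f 0 0 rfl (by norm_num)).symm
  have hp1 : theta (pderiv (1 : Fin 3) f) = pderiv (1 : Fin 2) (theta f) :=
    (pderiv_theta f 1 1 rfl (by norm_num)).symm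
  rw [hp0, hp1] at h
  linear_combination h

/-- For `f ∈ ℂ[x,y,z]` homogeneous of degree `d ≥ 1`, not divisible by `z`,
and `g(x,y) = f(x,y,1)`, the morphism `φ : AR(f) → AR(g)`,
`φ(a,b,c) = (θ(a) − x·θ(c), θ(b) − y·θ(c), d·θ(c))`, is surjective. -/
theorem phi_surjective (f : MvPolynomial (Fin 3) ℂ) (d : ℕ) (hd : 1 ≤ d)
    (hf : f.IsHomogeneous d) (hz : ¬ (X (2 : Fin 3) ∣ f)) :
    ∀ α β γ : MvPolynomial (Fin 2) ℂ,
      α * pderiv (0 : Fin 2) (theta f) + β * pderiv (1 : Fin 2) (theta f) + γ * theta f = 0 →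
      ∃ a b c : MvPolynomial (Fin 3) ℂ,
        a * pderiv (0 : Fin 3) f + b * pderiv (1 : Fin 3) f + c * pderiv (2 : Fin 3) f = 0 ∧
        theta a - X 0 * theta c = α ∧
        theta b - X 1 * theta c = β ∧
        (d : MvPolynomial (Fin 2) ℂ) * theta c = γ := by
  intro α β γ hrel
  have hdC : (d : ℂ) ≠ 0 := Nat.cast_ne_zero.mpr (by omega)
  set δ : ℂ := (d : ℂ)⁻¹ with hδ
  set γ' : MvPolynomial (Fin 2) ℂ := C δ * γ with hγ'
  set N : ℕ := max α.totalDegree (max β.totalDegree (γ.totalDegree + 1)) with hN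
  have hNα : α.totalDegree ≤ N := le_max_left _ _
  have hNβ : β.totalDegree ≤ N := le_max_of_le_right (le_max_left _ _)
  have hNγ : γ.totalDegree + 1 ≤ N := le_max_of_le_right (le_max_right _ _)
  clear_value δ γ' N
  have hγ'deg : γ'.totalDegree ≤ γ.totalDegree := by
    rw [hγ']
    have h1 := totalDegree_mul (C δ) γ
    have h2 : (C δ : MvPolynomial (Fin 2) ℂ).totalDegree = 0 := totalDegree_C δ
    omega
  have hXγ' : ∀ i : Fin 2, (X i * γ').totalDegree ≤ N := by
    intro i
    have h1 := totalDegree_mul (X i : MvPolynomial (Fin 2) ℂ) γ'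
    have h2 : (X i : MvPolynomial (Fin 2) ℂ).totalDegree = 1 := totalDegree_X i
    omega
  have haN : (α + X 0 * γ').totalDegree ≤ N :=
    le_trans (totalDegree_add _ _) (max_le hNα (hXγ' 0))
  have hbN : (β + X 1 * γ').totalDegree ≤ N :=
    le_trans (totalDegree_add _ _) (max_le hNβ (hXγ' 1))
  have hcN : γ'.totalDegree ≤ N := le_trans hγ'deg (by omega)
  refine ⟨lift N (α + X 0 * γ'), lift N (β + X 1 * γ'), lift N γ', ?_, ?_, ?_, ?_⟩
  · -- the syzygy
    set u := lift N (α + X 0 * γ') * pderiv (0 : Fin 3) f +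
      lift N (β + X 1 * γ') * pderiv (1 : Fin 3) f + lift N γ' * pderiv (2 : Fin 3) f with hu
    have huhom : u.IsHomogeneous (N + (d - 1)) := by
      refine IsHomogeneous.add (IsHomogeneous.add ?_ ?_) ?_ <;>
        exact IsHomogeneous.mul (lift_isHomogeneous (by assumption)) (pderiv_isHomogeneous _ hf)
    have hθu : theta u = 0 := by
      rw [hu, theta_add, theta_add, theta_mul, theta_mul, theta_mul,
        theta_lift, theta_lift, theta_lift, theta_pderiv_z hf]
      have hγ'd : γ' * C (d : ℂ) = γ := by
        rw [hγ', hδ, mul_comm, ← mul_assoc, ← map_mul, mul_inv_cancel₀ hdC, map_one, one_mul]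
      rw [← pderiv_theta f 0 0 rfl (by norm_num), ← pderiv_theta f 1 1 rfl (by norm_num)]
      linear_combination hrel + theta f * hγ'd
    have := lift_theta huhom
    rw [hθu] at this
    rw [← this, lift_zero]
  · rw [theta_lift, theta_lift]; ring
  · rw [theta_lift, theta_lift]; ring
  · rw [theta_lift]
    have : (d : MvPolynomial (Fin 2) ℂ) = C (d : ℂ) := by
      rw [map_natCast]
    rw [this, hγ', ← mul_assoc, ← map_mul, hδ, mul_inv_cancel₀ hdC, map_one, one_mul]
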